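/- Let p and q be distinct primes, X a type, and k ≥ 1. Suppose that to every finite subset K of X with at most k elements there is assigned a nonempty affine subspace F_K of the ZMod p–vector space of functions K → ZMod p, such that for all subsets L ⊆ K (|K| ≤ k) the image of F_K under the restriction map f ↦ f|_L equals F_L. Let d_K denote the dimension (over ZMod p) of the direction of F_K. Then: (i) the cardinality of F_K is p^{d_K}; (ii) for all L ⊆ K (|K| ≤ k) we have d_L ≤ d_K, and for every g ∈ F_L the cardinality of { f ∈ F_K : f|_L = g } is p^{d_K − d_L}; and consequently (iii) setting x_{K,f} := ((p : ZMod q)^{d_K})⁻¹ for f ∈ F_K (which is well defined since p is invertible in ZMod q), we have, in ZMod q, Σ_{f∈F_K} x_{K,f} = 1 for every such K, and Σ_{f∈F_K : f|_L = g} x_{K,f} = x_{L,g} for all L ⊆ K (|K| ≤ k) and g ∈ F_L. -/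

import Mathlib

section Aux

variable {p : ℕ} [Fact p.Prime] {V W : Type} [AddCommGroup V] [Module (ZMod p) V] [Finite V]
  [AddCommGroup W] [Module (ZMod p) W]

lemma aux_card (S : AffineSubspace (ZMod p) V) (hS : (S : Set V).Nonempty) :
    Nat.card S = p ^ Module.finrank (ZMod p) S.direction := by
  obtain ⟨x, hx⟩ := hS
  have e : S.direction ≃ S :=
    { toFun := fun v => ⟨v.1 +ᵥ x, AffineSubspace.vadd_mem_of_mem_direction v.2 hx⟩
      invFun := fun f => ⟨f.1 -ᵥ x, AffineSubspace.vsub_mem_direction f.2 hx⟩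
      left_inv := fun v => by simp
      right_inv := fun f => by simp }
  haveI : Fintype V := Fintype.ofFinite V
  haveI : Fintype ↥S.direction := Fintype.ofFinite _
  rw [← Nat.card_eq_of_bijective e e.bijective, Nat.card_eq_fintype_card,
    Module.card_eq_pow_finrank (K := ZMod p), ZMod.card]

lemma aux_fiber (S : AffineSubspace (ZMod p) V) (r : V →ₗ[ZMod p] W) {g : W} {f0 : V}
    (hf0 : f0 ∈ S) (hg : r f0 = g) :
    Nat.card {f : V // f ∈ S ∧ r f = g}
      = p ^ Module.finrank (ZMod p) (LinearMap.ker (r.domRestrict S.direction)) := by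
  have e : LinearMap.ker (r.domRestrict S.direction) ≃ {f : V // f ∈ S ∧ r f = g} :=
    { toFun := fun v => ⟨v.1.1 +ᵥ f0, AffineSubspace.vadd_mem_of_mem_direction v.1.2 hf0, by
        have h0 : r v.1.1 = 0 := v.2
        simp [map_add, h0, hg]⟩
      invFun := fun f => ⟨⟨f.1 -ᵥ f0, AffineSubspace.vsub_mem_direction f.2.1 hf0⟩, by
        have := f.2.2
        simp [LinearMap.mem_ker, map_sub, this, hg]⟩
      left_inv := fun v => by ext : 2; simp
      right_inv := fun f => by ext : 1; simp }
  haveI : Fintype V := Fintype.ofFinite V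
  haveI : Fintype ↥(LinearMap.ker (r.domRestrict S.direction)) := Fintype.ofFinite _
  rw [← Nat.card_eq_of_bijective e e.bijective, Nat.card_eq_fintype_card,
    Module.card_eq_pow_finrank (K := ZMod p), ZMod.card]

lemma aux_finsum {M : Type*} [AddCommMonoid M] {α : Type} [Finite α] (s : Set α) (c : M) :
    ∑ᶠ i ∈ s, c = Nat.card s • c := by
  haveI : Fintype α := Fintype.ofFinite α
  haveI : Fintype s := Fintype.ofFinite _
  rw [finsum_mem_eq_toFinset_sum, Finset.sum_const, Set.toFinset_card, Nat.card_eq_fintype_card]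

end Aux


/-- The linear restriction map `(K → ZMod p) → (L → ZMod p)` for `L ⊆ K`
(precomposition with the inclusion). -/
noncomputable def restrictLM (p : ℕ) {X : Type} {L K : Finset X} (h : L ⊆ K) :
    ((↥K : Type) → ZMod p) →ₗ[ZMod p] ((↥L : Type) → ZMod p) :=
  LinearMap.funLeft (ZMod p) (ZMod p) (fun y => ⟨y.1, h y.2⟩)

/-- **Statement 12.** Let `p ≠ q` be primes, `X` a type, `k ≥ 1`.  Suppose each
finite subset `K` of `X` with at most `k` elements carries a nonempty affine
subspace `F K` of `K → ZMod p` such that the image of `F K` under restriction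
to `L ⊆ K` is `F L`.  Writing `d K` for the dimension of the direction of
`F K`, then: (i) `|F K| = p ^ d K`; (ii) for `L ⊆ K`, `d L ≤ d K` and each
fibre of the restriction `F K → F L` has exactly `p ^ (d K − d L)` elements;
and (iii) the uniform weights `x K f = ((p : ZMod q) ^ d K)⁻¹` solve, in
`ZMod q`, the affine Sherali–Adams marginal system. -/
theorem affine_consistent_system_solves_modq_system
    (p q : ℕ) (hp : p.Prime) (hq : q.Prime) (hpq : p ≠ q)
    (X : Type) (k : ℕ) (hk : 1 ≤ k)
    (F : ∀ (K : Finset X), K.card ≤ k → AffineSubspace (ZMod p) ((↥K : Type) → ZMod p))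
    (hne : ∀ (K : Finset X) (hK : K.card ≤ k), ((F K hK : Set ((↥K : Type) → ZMod p))).Nonempty)
    (himg : ∀ (K L : Finset X) (hK : K.card ≤ k) (hLK : L ⊆ K),
      (F K hK).map (restrictLM p hLK).toAffineMap
        = F L ((Finset.card_le_card hLK).trans hK)) :
    -- (i)
    (∀ (K : Finset X) (hK : K.card ≤ k),
      Nat.card ↥(F K hK)
        = p ^ (Module.finrank (ZMod p) ↥(F K hK).direction)) ∧
    -- (ii)
    (∀ (K L : Finset X) (hK : K.card ≤ k) (hLK : L ⊆ K),
      Module.finrank (ZMod p) ↥(F L ((Finset.card_le_card hLK).trans hK)).direction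
          ≤ Module.finrank (ZMod p) ↥(F K hK).direction ∧
      ∀ g ∈ F L ((Finset.card_le_card hLK).trans hK),
        Nat.card { f : (↥K : Type) → ZMod p // f ∈ F K hK ∧ restrictLM p hLK f = g }
          = p ^ (Module.finrank (ZMod p) ↥(F K hK).direction
              - Module.finrank (ZMod p) ↥(F L ((Finset.card_le_card hLK).trans hK)).direction)) ∧
    -- (iii)
    (∀ (K : Finset X) (hK : K.card ≤ k),
      ∑ᶠ f ∈ (F K hK : Set ((↥K : Type) → ZMod p)),
          ((p : ZMod q) ^ (Module.finrank (ZMod p) ↥(F K hK).direction))⁻¹ = 1) ∧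
    (∀ (K L : Finset X) (hK : K.card ≤ k) (hLK : L ⊆ K),
      ∀ g ∈ F L ((Finset.card_le_card hLK).trans hK),
        ∑ᶠ f ∈ { f : (↥K : Type) → ZMod p | f ∈ F K hK ∧ restrictLM p hLK f = g },
            ((p : ZMod q) ^ (Module.finrank (ZMod p) ↥(F K hK).direction))⁻¹
          = ((p : ZMod q) ^ (Module.finrank (ZMod p)
              ↥(F L ((Finset.card_le_card hLK).trans hK)).direction))⁻¹) := by
  haveI := Fact.mk hp
  haveI := Fact.mk hq
  haveI : NeZero p := ⟨hp.ne_zero⟩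
  -- p is invertible mod q
  have hp0 : (p : ZMod q) ≠ 0 := by
    rw [Ne, ZMod.natCast_eq_zero_iff]
    intro hdvd
    exact hpq ((Nat.prime_dvd_prime_iff_eq hq hp).mp hdvd).symm
  -- (i)
  have part1 : ∀ (K : Finset X) (hK : K.card ≤ k),
      Nat.card ↥(F K hK) = p ^ (Module.finrank (ZMod p) ↥(F K hK).direction) :=
    fun K hK => aux_card _ (hne K hK)
  -- direction relation
  have hdir : ∀ (K L : Finset X) (hK : K.card ≤ k) (hLK : L ⊆ K),
      (F L ((Finset.card_le_card hLK).trans hK)).direction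
        = (F K hK).direction.map (restrictLM p hLK) := by
    intro K L hK hLK
    rw [← himg K L hK hLK, AffineSubspace.map_direction, LinearMap.toAffineMap_linear]
  have part2 : ∀ (K L : Finset X) (hK : K.card ≤ k) (hLK : L ⊆ K),
      Module.finrank (ZMod p) ↥(F L ((Finset.card_le_card hLK).trans hK)).direction
          ≤ Module.finrank (ZMod p) ↥(F K hK).direction ∧
      ∀ g ∈ F L ((Finset.card_le_card hLK).trans hK),
        Nat.card { f : (↥K : Type) → ZMod p // f ∈ F K hK ∧ restrictLM p hLK f = g }
          = p ^ (Module.finrank (ZMod p) ↥(F K hK).direction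
              - Module.finrank (ZMod p) ↥(F L ((Finset.card_le_card hLK).trans hK)).direction) := by
    intro K L hK hLK
    have hle : Module.finrank (ZMod p) ↥(F L ((Finset.card_le_card hLK).trans hK)).direction
        ≤ Module.finrank (ZMod p) ↥(F K hK).direction := by
      rw [hdir K L hK hLK]
      exact Submodule.finrank_map_le _ _
    refine ⟨hle, fun g hg => ?_⟩
    rw [← himg K L hK hLK] at hg
    obtain ⟨f0, hf0, hf0g⟩ := hg
    rw [aux_fiber (F K hK) (restrictLM p hLK) hf0 hf0g]
    congr 1
    have hrn := LinearMap.finrank_range_add_finrank_ker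
      ((restrictLM p hLK).domRestrict (F K hK).direction)
    rw [LinearMap.range_domRestrict] at hrn
    rw [← hdir K L hK hLK] at hrn
    omega
  refine ⟨part1, part2, ?_, ?_⟩
  · intro K hK
    have h1 : Nat.card (↑(F K hK) : Set ((↥K : Type) → ZMod p))
        = p ^ (Module.finrank (ZMod p) ↥(F K hK).direction) := part1 K hK
    rw [aux_finsum, h1, nsmul_eq_mul, Nat.cast_pow, mul_inv_cancel₀ (pow_ne_zero _ hp0)]
  · intro K L hK hLK g hg
    rw [aux_finsum]
    have hcard := (part2 K L hK hLK).2 g hg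
    have hle := (part2 K L hK hLK).1
    rw [show { f : (↥K : Type) → ZMod p | f ∈ F K hK ∧ restrictLM p hLK f = g }
        = Set.range (Subtype.val : { f : (↥K : Type) → ZMod p // f ∈ F K hK ∧ restrictLM p hLK f = g } → _) by
      ext f; simp [Set.mem_setOf_eq]] at *
    rw [Nat.card_range_of_injective Subtype.val_injective, hcard, nsmul_eq_mul, Nat.cast_pow,
      pow_sub₀ _ hp0 hle]
    field_simp
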